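/- arXiv:0709.4127 — 5 statements merged into one kernel-verified Lean document; each statement's English description precedes it below -/
import Mathlib

section
/- Let n > 3 be a natural number, let S be a class of singular limit ordinals, and let ⟨C_ν : ν ∈ S⟩ be a coherent square sequence on S. Assume that the set {α < ℵ_n : cf(α) = ℵ_{n−2} and α ∈ S} is stationary in ℵ_n. Then the set T_n = {β < ℵ_n : cf(β) = ℵ_1, β ∈ S, and ot(C_β) ≥ ℵ_{n−3}} is stationary in ℵ_n. -/
open Ordinal Cardinal Set

/-- `β` is a limit point of the set of ordinals `C`: `β > 0` and `β = sup (C ∩ β)`. -/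
def IsLimitPt (C : Set Ordinal) (β : Ordinal) : Prop :=
  0 < β ∧ β = sSup (C ∩ Set.Iio β)

/-- `C` is closed in `ν`: it contains all of its limit points below `ν`. -/
def ClosedIn (C : Set Ordinal) (ν : Ordinal) : Prop :=
  ∀ β < ν, IsLimitPt C β → β ∈ C

/-- `C` is unbounded (cofinal) in `ν`. -/
def UnboundedIn (C : Set Ordinal) (ν : Ordinal) : Prop :=
  sSup C = ν

/-- `C` is a closed unbounded subset of `κ`. -/
def IsClubIn (C : Set Ordinal) (κ : Ordinal) : Prop :=
  C ⊆ Set.Iio κ ∧ ClosedIn C κ ∧ UnboundedIn C κ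

/-- `T` is stationary in `κ`: it meets every club subset of `κ`. -/
def IsStationaryIn (T : Set Ordinal) (κ : Ordinal) : Prop :=
  ∀ C : Set Ordinal, IsClubIn C κ → (T ∩ C).Nonempty

/-- `ν` is a singular limit ordinal: a limit ordinal with `cf ν < ν`. -/
def IsSingLimit (ν : Ordinal) : Prop :=
  Order.IsSuccLimit ν ∧ ν.cof.ord < ν

/-- The order type of a set of ordinals. -/
noncomputable def otype (s : Set Ordinal.{0}) : Ordinal.{0} :=
  sInf {o : Ordinal.{0} | Ordinal.lift.{1, 0} o = Ordinal.type (@Subrel Ordinal.{0} (· < ·) (· ∈ s))}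

/-- `⟨C ν : ν ∈ S⟩` is a coherent square sequence on a class `S` of
singular limit ordinals. -/
def IsCoherentSquare (S : Set Ordinal) (C : Ordinal → Set Ordinal) : Prop :=
  (∀ ν ∈ S, IsSingLimit ν) ∧
  (∀ ν ∈ S, C ν ⊆ Set.Iio ν ∧ ClosedIn (C ν) ν ∧
    (Cardinal.aleph0 < ν.cof → UnboundedIn (C ν) ν)) ∧
  (∀ ν ∈ S, otype (C ν) < ν) ∧
  (∀ ν ∈ S, ∀ β < ν, IsLimitPt (C ν) β → β ∈ S ∧ C β = C ν ∩ Set.Iio β)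

lemma bddAbove_of_subset_Iio {s : Set Ordinal} {ν : Ordinal} (h : s ⊆ Set.Iio ν) :
    BddAbove s := ⟨ν, fun _ hx => (h hx).le⟩

lemma exists_gt_of_sSup_eq {s : Set Ordinal} {ν : Ordinal} (hsup : sSup s = ν) (hν : 0 < ν) :
    ∀ γ < ν, ∃ x ∈ s, γ < x := by
  intro γ hγ
  by_contra h
  push_neg at h
  rcases s.eq_empty_or_nonempty with rfl | hne
  · rw [csSup_empty] at hsup
    exact hν.ne' (by simpa using hsup.symm)
  · have h2 : sSup s ≤ γ := csSup_le hne h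
    rw [hsup] at h2
    exact absurd hγ (not_lt.2 h2)

lemma sSup_eq_of_unbounded {s : Set Ordinal} {ν : Ordinal} (hsub : s ⊆ Set.Iio ν)
    (h : ∀ γ < ν, ∃ x ∈ s, γ < x) (hν : 0 < ν) : sSup s = ν := by
  obtain ⟨x0, hx0, -⟩ := h 0 hν
  apply le_antisymm
  · exact csSup_le ⟨x0, hx0⟩ fun x hx => (hsub hx).le
  · refine le_of_forall_lt fun γ hγ => ?_
    obtain ⟨x, hx, hγx⟩ := h γ hγ
    exact hγx.trans_le (le_csSup (bddAbove_of_subset_Iio hsub) hx)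

lemma isLimitPt_of {Cs : Set Ordinal} {β : Ordinal} (hβ : 0 < β)
    (h : ∀ b < β, ∃ x ∈ Cs, b < x ∧ x < β) : IsLimitPt Cs β := by
  refine ⟨hβ, ?_⟩
  have h' : ∀ b < β, ∃ x ∈ Cs ∩ Set.Iio β, b < x := fun b hb => by
    obtain ⟨x, h1, h2, h3⟩ := h b hb; exact ⟨x, ⟨h1, h3⟩, h2⟩
  exact (sSup_eq_of_unbounded (fun x hx => hx.2) h' hβ).symm

lemma unbounded_of_isLimitPt {Cs : Set Ordinal} {β : Ordinal} (h : IsLimitPt Cs β) :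
    ∀ b < β, ∃ x ∈ Cs, b < x ∧ x < β := by
  intro b hb
  obtain ⟨x, hx, h3⟩ := exists_gt_of_sSup_eq (s := Cs ∩ Set.Iio β) h.2.symm h.1 b hb
  exact ⟨x, hx.1, h3, hx.2⟩

lemma type_subrel_lt_port (o : Ordinal.{0}) :
    Ordinal.type (@Subrel Ordinal.{0} (· < ·) (· ∈ {o' : Ordinal | o' < o})) = Ordinal.lift.{1} o :=
  Ordinal.type_lt_Iio o

lemma lift_otype {s : Set Ordinal.{0}} (hb : BddAbove s) :
    Ordinal.lift.{1, 0} (otype s) = Ordinal.type (@Subrel Ordinal.{0} (· < ·) (· ∈ s)) := by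
  obtain ⟨ν, hν⟩ := hb
  have hle : Ordinal.type (@Subrel Ordinal.{0} (· < ·) (· ∈ s)) ≤ Ordinal.lift.{1, 0} (ν + 1) := by
    rw [← type_subrel_lt_port (ν + 1)]
    exact RelEmbedding.ordinal_type_le
      (RelEmbedding.ofMonotone
        (fun x => ⟨x.1, lt_of_le_of_lt (hν x.2) (lt_add_one ν)⟩)
        (fun a b hab => hab))
  obtain ⟨o, ho⟩ := Ordinal.mem_range_lift_of_le hle
  have : otype s ∈ {o : Ordinal.{0} |
      Ordinal.lift.{1, 0} o = Ordinal.type (@Subrel Ordinal.{0} (· < ·) (· ∈ s))} :=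
    csInf_mem ⟨o, ho⟩
  exact this

lemma otype_le_otype {s t : Set Ordinal.{0}} (hst : s ⊆ t) (ht : BddAbove t) :
    otype s ≤ otype t := by
  rw [← Ordinal.lift_le.{1}, lift_otype (ht.mono hst), lift_otype ht]
  exact RelEmbedding.ordinal_type_le
    (RelEmbedding.ofMonotone (fun x => ⟨x.1, hst x.2⟩) fun a b h => h)

lemma otype_inter_Iio_lt {t : Set Ordinal.{0}} {γ : Ordinal} (ht : BddAbove t) (hγ : γ ∈ t) :
    otype (t ∩ Set.Iio γ) < otype t := by
  rw [← Ordinal.lift_lt.{1}, lift_otype (ht.mono Set.inter_subset_left), lift_otype ht]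
  refine PrincipalSeg.ordinal_type_lt
    ⟨RelEmbedding.ofMonotone (fun x => ⟨x.1, x.2.1⟩) (fun a b h => h), ⟨γ, hγ⟩, ?_⟩
  intro b
  constructor
  · rintro ⟨a, rfl⟩
    exact a.2.2
  · intro hb
    exact ⟨⟨b.1, b.2, hb⟩, Subtype.ext rfl⟩

lemma otype_le_of_initial_lt {t : Set Ordinal.{0}} {θ : Ordinal} (ht : BddAbove t)
    (h : ∀ γ ∈ t, otype (t ∩ Set.Iio γ) < θ) : otype t ≤ θ := by
  rw [← Ordinal.lift_le.{1}, lift_otype ht, ← type_subrel_lt_port θ]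
  refine RelEmbedding.ordinal_type_le (RelEmbedding.ofMonotone
    (fun x => ⟨otype (t ∩ Set.Iio x.1), h x.1 x.2⟩) ?_)
  intro a b hab
  show otype (t ∩ Set.Iio a.1) < otype (t ∩ Set.Iio b.1)
  have h1 : (t ∩ Set.Iio b.1) ∩ Set.Iio a.1 = t ∩ Set.Iio a.1 := by
    ext x
    constructor
    · rintro ⟨⟨h1, _⟩, h3⟩; exact ⟨h1, h3⟩
    · rintro ⟨h1, h3⟩; exact ⟨⟨h1, h3.trans hab⟩, h3⟩
  have h2 := otype_inter_Iio_lt (t := t ∩ Set.Iio b.1) (ht.mono Set.inter_subset_left)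
    (⟨a.2, hab⟩ : a.1 ∈ t ∩ Set.Iio b.1)
  rwa [h1] at h2

lemma cof_le_card_otype {s : Set Ordinal.{0}} {ν : Ordinal} (hsub : s ⊆ Set.Iio ν)
    (hsup : sSup s = ν) : ν.cof ≤ (otype s).card := by
  have hbs : BddAbove s := bddAbove_of_subset_Iio hsub
  have key : Ordinal.type (@Subrel Ordinal.{0} (· < ·) (· ∈ {x : Ordinal | x < otype s})) =
      Ordinal.type (@Subrel Ordinal.{0} (· < ·) (· ∈ s)) := by
    rw [type_subrel_lt_port, lift_otype hbs]
  obtain ⟨g⟩ := Ordinal.type_eq.1 key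
  let e := (Ordinal.ToType.mk (o := otype s))
  let f : (otype s).ToType → Ordinal := fun x => (g (e.symm x)).1
  have hf_mem : ∀ x, f x ∈ s := fun x => (g (e.symm x)).2
  have hrange : Set.range f = s := by
    apply Set.Subset.antisymm
    · rintro _ ⟨x, rfl⟩; exact hf_mem x
    · intro y hy
      obtain ⟨z, hz⟩ := g.surjective ⟨y, hy⟩
      refine ⟨e z, ?_⟩
      show (g (e.symm (e z))).1 = y
      erw [OrderIso.symm_apply_apply, hz]
  have hsupf : iSup f = ν := by
    rw [← sSup_range, hrange, hsup]
  have hlt : ∀ x, f x < iSup f := fun x => by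
    rw [hsupf]; exact hsub (hf_mem x)
  have h2 := Ordinal.cof_iSup_le hlt
  rw [hsupf, mk_toType] at h2
  exact h2

lemma exists_common_limitPt {A B : Set Ordinal} {ν : Ordinal} (hcof : ℵ₀ < ν.cof)
    (hA : ∀ γ < ν, ∃ x ∈ A, γ < x ∧ x < ν) (hB : ∀ γ < ν, ∃ x ∈ B, γ < x ∧ x < ν) :
    ∀ γ < ν, ∃ β, γ < β ∧ β < ν ∧ IsLimitPt A β ∧ IsLimitPt B β := by
  intro γ hγ
  choose nA hnA1 hnA2 hnA3 using hA
  choose nB hnB1 hnB2 hnB3 using hB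
  let step : {x : Ordinal // x < ν} → {x : Ordinal // x < ν} := fun p =>
    ⟨nB (nA p.1 p.2) (hnA3 p.1 p.2), hnB3 _ _⟩
  let y : ℕ → {x : Ordinal // x < ν} := fun k => step^[k] ⟨γ, hγ⟩
  have hy0 : y 0 = ⟨γ, hγ⟩ := rfl
  have hystep : ∀ k, y (k + 1) = step (y k) := fun k => Function.iterate_succ_apply' step k _
  have hyA : ∀ k, nA (y k).1 (y k).2 ∈ A := fun k => hnA1 _ _
  have hyB : ∀ k, (y (k + 1)).1 ∈ B := fun k => by rw [hystep]; exact hnB1 _ _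
  have hlt1 : ∀ k, (y k).1 < nA (y k).1 (y k).2 := fun k => hnA2 _ _
  have hlt2 : ∀ k, nA (y k).1 (y k).2 < (y (k + 1)).1 := fun k => by
    rw [hystep]; exact hnB2 _ _
  have hmono : ∀ k, (y k).1 < (y (k + 1)).1 := fun k => (hlt1 k).trans (hlt2 k)
  let f0 : ℕ → Ordinal := fun k => (y k).1
  have hβν : iSup f0 < ν := by
    apply Ordinal.iSup_lt_ord_lift _ (fun k => (y k).2)
    rwa [Cardinal.mk_nat, Cardinal.lift_aleph0]
  have hγβ : γ < iSup f0 := by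
    have : f0 0 < f0 1 := hmono 0
    exact lt_of_lt_of_le this (Ordinal.le_iSup f0 1)
  have h0β : 0 < iSup f0 := lt_of_le_of_lt zero_le hγβ
  refine ⟨iSup f0, hγβ, hβν, isLimitPt_of h0β ?_, isLimitPt_of h0β ?_⟩
  · intro b hb
    obtain ⟨k, hk⟩ := Ordinal.lt_iSup_iff.1 hb
    refine ⟨nA (y k).1 (y k).2, hyA k, hk.trans (hlt1 k), ?_⟩
    exact lt_of_lt_of_le (hlt2 k) (Ordinal.le_iSup f0 (k + 1))
  · intro b hb
    obtain ⟨k, hk⟩ := Ordinal.lt_iSup_iff.1 hb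
    refine ⟨(y (k + 1)).1, hyB k, hk.trans (hmono k), ?_⟩
    exact lt_of_lt_of_le (hmono (k + 1)) (Ordinal.le_iSup f0 (k + 2))

/-- If `{α < ℵ_n : cf α = ℵ_{n-2}, α ∈ S}` is stationary in `ℵ_n` (for `n > 3`),
then `T_n = {β < ℵ_n : cf β = ℵ_1, β ∈ S, ot (C_β) ≥ ℵ_{n-3}}` is stationary in `ℵ_n`. -/
theorem squareSeq_stationary_large_order_type
    (n : ℕ) (hn : 3 < n) (S : Set Ordinal) (C : Ordinal → Set Ordinal)
    (hsq : IsCoherentSquare S C)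
    (hstat : IsStationaryIn
      {α | α < (Cardinal.aleph (n : Ordinal)).ord ∧
           α.cof = Cardinal.aleph ((n - 2 : ℕ) : Ordinal) ∧ α ∈ S}
      (Cardinal.aleph (n : Ordinal)).ord) :
    IsStationaryIn
      {β | β < (Cardinal.aleph (n : Ordinal)).ord ∧
           β.cof = Cardinal.aleph 1 ∧ β ∈ S ∧
           (Cardinal.aleph ((n - 3 : ℕ) : Ordinal)).ord ≤ otype (C β)}
      (Cardinal.aleph (n : Ordinal)).ord := by
  obtain ⟨hsing, hCprop, hot, hcoh⟩ := hsq
  intro D hD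
  obtain ⟨hDsub, hDclosed, hDunb⟩ := hD
  set κ := (Cardinal.aleph (n : Ordinal)).ord with hκdef
  -- cardinal arithmetic facts
  have hℵ1n2 : Cardinal.aleph (1 : Ordinal) < Cardinal.aleph ((n - 2 : ℕ) : Ordinal) := by
    apply Cardinal.aleph_lt_aleph.2
    have : ((1 : ℕ) : Ordinal) < ((n - 2 : ℕ) : Ordinal) := by
      exact_mod_cast (by omega : (1 : ℕ) < n - 2)
    simpa using this
  have hℵ0n2 : ℵ₀ < Cardinal.aleph ((n - 2 : ℕ) : Ordinal) := by
    rw [← Cardinal.aleph_zero]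
    apply Cardinal.aleph_lt_aleph.2
    exact_mod_cast (by omega : 0 < n - 2)
  have hn3n2 : Cardinal.aleph ((n - 3 : ℕ) : Ordinal) <
      Cardinal.aleph ((n - 2 : ℕ) : Ordinal) := by
    apply Cardinal.aleph_lt_aleph.2
    exact_mod_cast (by omega : n - 3 < n - 2)
  have hκ0 : 0 < κ := by
    rw [hκdef, Cardinal.lt_ord, Ordinal.card_zero]
    exact Cardinal.aleph_pos _
  have hκcof : κ.cof = Cardinal.aleph (n : Ordinal) := by
    have hn' : ((n : ℕ) : Ordinal) = Order.succ ((n - 1 : ℕ) : Ordinal) := by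
      rw [← Ordinal.add_one_eq_succ]
      exact_mod_cast congrArg (Nat.cast (R := Ordinal.{0})) (by omega : n = (n - 1) + 1)
    rw [hκdef, hn']
    exact (Cardinal.isRegular_aleph_succ _).cof_eq
  have hℵ0κ : ℵ₀ < κ.cof := by
    rw [hκcof, ← Cardinal.aleph_zero]
    apply Cardinal.aleph_lt_aleph.2
    exact_mod_cast (by omega : 0 < n)
  have hDunb' : ∀ γ < κ, ∃ x ∈ D, γ < x ∧ x < κ := by
    intro γ hγ
    obtain ⟨x, h1, h2⟩ := exists_gt_of_sSup_eq hDunb hκ0 γ hγ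
    exact ⟨x, h1, h2, hDsub h1⟩
  -- the derived club of limit points of D
  have hD'club : IsClubIn {β | β < κ ∧ IsLimitPt D β} κ := by
    refine ⟨fun x hx => hx.1, ?_, ?_⟩
    · intro β hβ hlim
      refine ⟨hβ, isLimitPt_of hlim.1 ?_⟩
      intro b hb
      obtain ⟨x, hx, h1, h2⟩ := unbounded_of_isLimitPt hlim b hb
      exact ⟨x, hDclosed x hx.1 hx.2, h1, h2⟩
    · apply sSup_eq_of_unbounded (fun x hx => hx.1) ?_ hκ0
      intro γ hγ
      obtain ⟨β, h1, h2, h3, -⟩ := exists_common_limitPt hℵ0κ hDunb' hDunb' γ hγ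
      exact ⟨β, ⟨h2, h3⟩, h1⟩
  obtain ⟨α, hT, hαD'⟩ := hstat _ hD'club
  obtain ⟨hακ, hαcof, hαS⟩ := hT
  have hαlim : IsLimitPt D α := hαD'.2
  have hα0 : 0 < α := hαlim.1
  obtain ⟨hCsub, hCclosed, hCunb0⟩ := hCprop α hαS
  have hα2 : ℵ₀ < α.cof := by rw [hαcof]; exact hℵ0n2
  have hCsup : sSup (C α) = α := hCunb0 hα2
  have hCunb : ∀ γ < α, ∃ x ∈ C α, γ < x ∧ x < α := by
    intro γ hγ
    obtain ⟨x, h1, h2⟩ := exists_gt_of_sSup_eq hCsup hα0 γ hγ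
    exact ⟨x, h1, h2, hCsub h1⟩
  have hDα : ∀ γ < α, ∃ x ∈ D, γ < x ∧ x < α := unbounded_of_isLimitPt hαlim
  set θ := (Cardinal.aleph ((n - 3 : ℕ) : Ordinal)).ord with hθdef
  -- find δ < α with θ ≤ otype (C α ∩ Iio δ)
  have hcofle : α.cof ≤ (otype (C α)).card := cof_le_card_otype hCsub hCsup
  have hθlt : ¬ otype (C α) ≤ θ := by
    intro hle
    have h1 := Ordinal.card_le_card hle
    rw [hθdef, Cardinal.card_ord] at h1
    rw [hαcof] at hcofle
    exact absurd (hcofle.trans h1) (not_le.2 hn3n2)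
  obtain ⟨δ, hδα, hδθ⟩ : ∃ δ < α, θ ≤ otype (C α ∩ Set.Iio δ) := by
    by_contra h
    push_neg at h
    exact hθlt (otype_le_of_initial_lt (bddAbove_of_subset_Iio hCsub)
      (fun γ hγ => h γ (hCsub hγ)))
  -- the target set s and its closure s'
  set s : Set Ordinal := (C α ∩ D) ∩ Set.Ioi δ with hsdef
  have hsunb : ∀ γ < α, ∃ x ∈ s, γ < x ∧ x < α := by
    intro γ hγ
    obtain ⟨β', h1, h2, h3, h4⟩ := exists_common_limitPt hα2 hCunb hDα (max γ δ)
      (max_lt hγ hδα)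
    exact ⟨β', ⟨⟨hCclosed β' h2 h3, hDclosed β' (h2.trans hακ) h4⟩,
      lt_of_le_of_lt (le_max_right γ δ) h1⟩, lt_of_le_of_lt (le_max_left γ δ) h1, h2⟩
  have hssub : s ⊆ Set.Iio α := fun x hx => hCsub hx.1.1
  set s' : Set Ordinal := s ∪ Set.Ici α with hs'def
  have hs'unb : ¬ BddAbove s' := by
    rintro ⟨b, hb⟩
    have h1 : max (b + 1) α ∈ s' := Or.inr (Set.mem_Ici.2 (le_max_right _ _))
    have h2 : b + 1 ≤ b := le_trans (le_max_left _ _) (hb h1)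
    exact absurd h2 (by simp)
  have hs'closed : IsClosed s' := by
    rw [Ordinal.isClosed_iff_iSup]
    intro ι hι f hf
    have hbdd : BddAbove (Set.range f) := Ordinal.bddAbove_range f
    rcases le_or_gt α (⨆ i, f i) with h | h
    · exact Or.inr h
    · have hfs : ∀ i, f i ∈ s := by
        intro i
        rcases hf i with h1 | h1
        · exact h1
        · exact absurd ((le_ciSup hbdd i).trans_lt h) (not_lt.2 h1)
      rcases em (∃ i, f i = ⨆ i, f i) with ⟨i, hi⟩ | hnot
      · exact Or.inl (hi ▸ hfs i)
      · push_neg at hnot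
        have hflt : ∀ i, f i < ⨆ i, f i := fun i => (le_ciSup hbdd i).lt_of_ne (hnot i)
        have hu0 : (0 : Ordinal) < ⨆ i, f i :=
          lt_of_le_of_lt zero_le (hflt hι.some)
        have hlp : ∀ b < ⨆ i, f i, ∃ x ∈ s, b < x ∧ x < ⨆ i, f i := by
          intro b hb
          obtain ⟨i, hi⟩ := (lt_ciSup_iff hbdd).1 hb
          exact ⟨f i, hfs i, hi, hflt i⟩
        refine Or.inl ⟨⟨?_, ?_⟩, ?_⟩
        · refine hCclosed _ h (isLimitPt_of hu0 fun b hb => ?_)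
          obtain ⟨x, h1, h2, h3⟩ := hlp b hb
          exact ⟨x, h1.1.1, h2, h3⟩
        · refine hDclosed _ (h.trans hακ) (isLimitPt_of hu0 fun b hb => ?_)
          obtain ⟨x, h1, h2, h3⟩ := hlp b hb
          exact ⟨x, h1.1.2, h2, h3⟩
        · exact lt_trans (hfs hι.some).2 (hflt hι.some)
  have hnorm : Order.IsNormal (Ordinal.enumOrd s') :=
    (Ordinal.enumOrd_isNormal_iff_isClosed hs'unb).2 hs'closed
  have hω₁lim : Order.IsSuccLimit (Cardinal.aleph (1 : Ordinal)).ord :=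
    Cardinal.isSuccLimit_ord (Cardinal.aleph0_le_aleph 1)
  have hcardle : ∀ j ≤ (Cardinal.aleph (1 : Ordinal)).ord, j.card < α.cof := by
    intro j hj
    rw [hαcof]
    calc j.card ≤ (Cardinal.aleph (1 : Ordinal)).ord.card := Ordinal.card_le_card hj
      _ = Cardinal.aleph (1 : Ordinal) := Cardinal.card_ord _
      _ < _ := hℵ1n2
  have hβlt : ∀ j ≤ (Cardinal.aleph (1 : Ordinal)).ord, Ordinal.enumOrd s' j < α := by
    intro j
    induction j using Ordinal.induction with
    | _ j IH =>
      intro hj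
      have hu : Ordinal.bsup j (fun k _ => Ordinal.enumOrd s' k) < α :=
        Ordinal.bsup_lt_ord (hcardle j hj)
          (fun k hk => IH k hk (le_of_lt (lt_of_lt_of_le hk hj)))
      obtain ⟨x, hx, hux, hxα⟩ := hsunb _ hu
      have hle : Ordinal.enumOrd s' j ≤ x :=
        Ordinal.enumOrd_le_of_forall_lt (Or.inl hx)
          (fun b hb => lt_of_le_of_lt (Ordinal.le_bsup _ b hb) hux)
      exact lt_of_le_of_lt hle hxα
  set β := Ordinal.enumOrd s' (Cardinal.aleph (1 : Ordinal)).ord with hβdef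
  have hβα : β < α := hβlt _ le_rfl
  have hβs : β ∈ s := by
    rcases Ordinal.enumOrd_mem hs'unb (Cardinal.aleph (1 : Ordinal)).ord with h | h
    · exact h
    · exact absurd hβα (not_lt.2 h)
  have hβδ : δ < β := hβs.2
  have hβ0 : 0 < β := lt_of_le_of_lt zero_le hβδ
  have hβunb : ∀ b < β, ∃ x ∈ s, b < x ∧ x < β := by
    intro b hb
    obtain ⟨j, hj, hjb⟩ := (hnorm.lt_iff_exists_lt hω₁lim).1 hb
    refine ⟨Ordinal.enumOrd s' j, ?_, hjb, Ordinal.enumOrd_strictMono hs'unb hj⟩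
    rcases Ordinal.enumOrd_mem hs'unb j with h | h
    · exact h
    · exact absurd (hβlt j hj.le) (not_lt.2 h)
  have hβlpC : IsLimitPt (C α) β := isLimitPt_of hβ0 fun b hb => by
    obtain ⟨x, h1, h2, h3⟩ := hβunb b hb; exact ⟨x, h1.1.1, h2, h3⟩
  have hβlpD : IsLimitPt D β := isLimitPt_of hβ0 fun b hb => by
    obtain ⟨x, h1, h2, h3⟩ := hβunb b hb; exact ⟨x, h1.1.2, h2, h3⟩
  obtain ⟨hβS, hβC⟩ := hcoh α hαS β hβα hβlpC
  have hβcof : β.cof = Cardinal.aleph 1 := by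
    rw [hβdef, Ordinal.cof_map_of_isNormal hnorm hω₁lim]
    exact Cardinal.isRegular_aleph_one.cof_eq
  have hotype : θ ≤ otype (C β) := by
    rw [hβC]
    refine le_trans hδθ (otype_le_otype ?_ (bddAbove_of_subset_Iio fun x hx => hx.2))
    intro x hx
    exact ⟨hx.1, hx.2.trans hβδ⟩
  exact ⟨β, ⟨hβα.trans hακ, hβcof, hβS, hotype⟩, hβs.1.2⟩
end

section
/- Let ρ be an infinite regular cardinal, let μ be an ordinal, and let D be a set of ordinals that is closed in sup(D) (i.e., D contains every ordinal β̄ < sup(D) with β̄ = sup(D ∩ β̄) > 0) and whose order type satisfies ot(D) ≥ μ + ρ (ordinal addition). Then there exists an ordinal β which is a limit point of D (i.e., β > 0 and β = sup(D ∩ β)) such that cf(β) = ρ and ot(D ∩ β) ≥ μ. -/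
open Ordinal Cardinal Set

lemma cof_blsub_of_strictMono {c : Cardinal} (hc : c.IsRegular)
    (g : ∀ ξ < c.ord, Ordinal.{0})
    (hg : ∀ {i j} (hi : i < c.ord) (hj : j < c.ord), i < j → g i hi < g j hj) :
    (blsub.{0,0} c.ord g).cof = c := by
  have hlim : Order.IsSuccLimit c.ord := Cardinal.isSuccLimit_ord hc.aleph0_le
  have gmono : ∀ {i j} (hi : i < c.ord) (hj : j < c.ord), i ≤ j → g i hi ≤ g j hj := by
    intro i j hi hj h
    rcases h.lt_or_eq with h | rfl
    · exact (hg hi hj h).le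
    · rfl
  refine le_antisymm (by simpa using cof_blsub_le g) ?_
  rw [le_cof_iff_blsub]
  intro o f hf
  by_contra hlt
  push_neg at hlt
  have key : ∀ i (hi : i < o), ∃ ξ, ∃ hξ : ξ < c.ord, f i hi ≤ g ξ hξ := by
    intro i hi
    have : f i hi < blsub.{0,0} c.ord g := hf ▸ lt_blsub f i hi
    exact (lt_blsub_iff.{0,0}).1 this
  choose F hF1 hF2 using key
  have hs : bsup.{0,0} o F < c.ord := bsup_lt_ord_of_isRegular hc hlt hF1
  have hs1 : Order.succ (bsup.{0,0} o F) < c.ord := hlim.succ_lt hs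
  have hble : blsub.{0,0} o f ≤ Order.succ (g _ hs) := by
    refine blsub_le fun i hi => ?_
    exact lt_of_le_of_lt ((hF2 i hi).trans (gmono (hF1 i hi) hs (le_bsup F i hi)))
      (Order.lt_succ _)
  have : blsub.{0,0} o f < blsub.{0,0} c.ord g := by
    refine hble.trans_lt (lt_of_le_of_lt ?_ (lt_blsub g _ hs1))
    rw [Order.succ_le_iff]
    exact hg hs hs1 (Order.lt_succ _)
  rw [hf] at this
  exact lt_irrefl _ this

/-- If `D` is a set of ordinals closed in `sup D` with `ot D ≥ μ + ρ` (`ρ` an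
infinite regular cardinal), then there is a limit point `β` of `D` with
`cf β = ρ` and `ot (D ∩ β) ≥ μ`. -/
theorem exists_limitPt_cof_of_closed_large_order_type
    (ρ : Cardinal) (hρ : ρ.IsRegular) (μ : Ordinal) (D : Set Ordinal)
    (hclosed : ClosedIn D (sSup D))
    (hot : μ + ρ.ord ≤ otype D) :
    ∃ β, IsLimitPt D β ∧ β.cof = ρ ∧ μ ≤ otype (D ∩ Set.Iio β) := by
  have hlim : Order.IsSuccLimit ρ.ord := Cardinal.isSuccLimit_ord hρ.aleph0_le
  have h0 : (0 : Ordinal) < ρ.ord := hlim.pos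
  set r : ↥D → ↥D → Prop := @Subrel Ordinal.{0} (· < ·) (· ∈ D) with hrdef
  -- the defining set for `otype D` is nonempty
  have hne : {o : Ordinal.{0} | Ordinal.lift.{1,0} o = type r}.Nonempty := by
    by_contra h
    rw [Set.not_nonempty_iff_eq_empty] at h
    have : otype D = 0 := by rw [otype, h, Ordinal.sInf_empty]
    rw [this] at hot
    exact absurd hot (by simpa using (h0.trans_le (le_add_self (a := ρ.ord) (b := μ))).not_ge)
  have hDty : Ordinal.lift.{1,0} (otype D) = type r := csInf_mem hne
  have hidx : ∀ ξ < ρ.ord, Ordinal.lift.{1,0} (μ + ξ) < type r := fun ξ hξ => by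
    rw [← hDty]
    exact lift_lt.2 ((add_lt_add_right hξ μ).trans_le hot)
  set g : ∀ ξ < ρ.ord, Ordinal.{0} :=
    fun ξ hξ => ((enum r ⟨Ordinal.lift.{1,0} (μ + ξ), hidx ξ hξ⟩ : ↥D) : Ordinal) with hgdef
  have gmem : ∀ ξ (hξ : ξ < ρ.ord), g ξ hξ ∈ D :=
    fun ξ hξ => (enum r ⟨Ordinal.lift.{1,0} (μ + ξ), hidx ξ hξ⟩).2
  have gstrict : ∀ {i j} (hi : i < ρ.ord) (hj : j < ρ.ord), i < j → g i hi < g j hj := by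
    intro i j hi hj h
    exact (enum_lt_enum (r := r)).2 (Subtype.mk_lt_mk.2 (lift_lt.2 (add_lt_add_right h μ)))
  set β : Ordinal := blsub.{0,0} ρ.ord g with hβdef
  have glt : ∀ ξ (hξ : ξ < ρ.ord), g ξ hξ < β := fun ξ hξ => lt_blsub g ξ hξ
  have hβpos : 0 < β := (zero_le).trans_lt (glt 0 h0)
  set E : Set Ordinal := D ∩ Set.Iio β with hEdef
  have bddE : BddAbove E := ⟨β, fun x hx => hx.2.le⟩
  have gE : ∀ ξ (hξ : ξ < ρ.ord), g ξ hξ ∈ E := fun ξ hξ => ⟨gmem ξ hξ, glt ξ hξ⟩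
  have hlimpt : IsLimitPt D β := by
    refine ⟨hβpos, le_antisymm ?_ (csSup_le ⟨_, gE 0 h0⟩ fun x hx => hx.2.le)⟩
    refine blsub_le fun ξ hξ => ?_
    have hξ1 : Order.succ ξ < ρ.ord := hlim.succ_lt hξ
    exact (gstrict hξ hξ1 (Order.lt_succ ξ)).trans_le (le_csSup bddE (gE _ hξ1))
  have hcof : β.cof = ρ := cof_blsub_of_strictMono hρ g gstrict
  -- order type of E
  set r' : ↥E → ↥E → Prop := @Subrel Ordinal.{0} (· < ·) (· ∈ E) with hr'def
  have hle : type r' ≤ Ordinal.lift.{1,0} β := by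
    have emb : r' ↪r @Subrel Ordinal.{0} (· < ·) (· ∈ Set.Iio β) :=
      (Subrel.relEmbedding _ _).codRestrict _ (fun a => a.2.2)
    have := emb.ordinal_type_le
    rwa [show type (@Subrel Ordinal.{0} (· < ·) (· ∈ Set.Iio β)) = Ordinal.lift.{1,0} β from
      typein_ordinal β] at this
  obtain ⟨t, ht⟩ := Ordinal.mem_range_lift_of_le hle
  have hne' : {o : Ordinal.{0} | Ordinal.lift.{1,0} o = type r'}.Nonempty := ⟨t, ht⟩
  have hEty : Ordinal.lift.{1,0} (otype E) = type r' := csInf_mem hne'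
  have hμD : μ ≤ otype D := le_trans (le_self_add (a := μ) (b := ρ.ord)) hot
  have hidxμ : ∀ ξ ∈ Set.Iio μ, Ordinal.lift.{1,0} ξ < type r := fun ξ hξ => by
    rw [← hDty]; exact lift_lt.2 (hξ.trans_le hμD)
  have hμle : Ordinal.lift.{1,0} μ ≤ type r' := by
    rw [show Ordinal.lift.{1,0} μ = type (@Subrel Ordinal.{0} (· < ·) (· ∈ Set.Iio μ)) from
      (typein_ordinal μ).symm]
    refine type_le_iff'.2 ⟨RelEmbedding.ofMonotone
      (fun x => ⟨((enum r ⟨Ordinal.lift.{1,0} x.1, hidxμ x.1 x.2⟩ : ↥D) : Ordinal), ?_, ?_⟩)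
      ?_⟩
    · exact (enum r ⟨Ordinal.lift.{1,0} x.1, hidxμ x.1 x.2⟩).2
    · refine lt_trans (b := g 0 h0) ?_ (glt 0 h0)
      exact (enum_lt_enum (r := r)).2 (Subtype.mk_lt_mk.2 (lift_lt.2 (by rw [add_zero]; exact x.2)))
    · intro a b h
      exact (enum_lt_enum (r := r)).2 (Subtype.mk_lt_mk.2 (lift_lt.2 h))
  refine ⟨β, hlimpt, hcof, ?_⟩
  rw [← Ordinal.lift_le.{1}]
  exact hμle.trans_eq hEty.symm
end

section
/- Let α be an ordinal with ω^α = α in ordinal arithmetic (every primitive recursively closed ordinal has this property). Then the relation <* is a well-order on the collection [α]^{<ω} of finite subsets of α, and the order type of ([α]^{<ω}, <*) is exactly α. -/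
open Ordinal Cardinal Set

/-- The ordering `<*` on finite sets of ordinals:
`u <* v` iff `u ≠ v` and the maximum of the symmetric difference `u ∆ v`
belongs to `v`. -/
def ltStar (u v : Finset Ordinal) : Prop :=
  u ≠ v ∧ ∃ m : Ordinal, (symmDiff u v).max = (m : WithBot Ordinal) ∧ m ∈ v

noncomputable def fL (l : List Ordinal) : Ordinal := l.foldr (fun a r => 2 ^ a + r) 0

noncomputable def fS (u : Finset Ordinal) : Ordinal := fL (u.sort (· ≥ ·))

lemma fS_insert {a : Ordinal} {u : Finset Ordinal} (h : ∀ x ∈ u, x < a) :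
    fS (insert a u) = 2 ^ a + fS u := by
  have ha : a ∉ u := fun hm => absurd (h a hm) (lt_irrefl a)
  rw [fS, Finset.sort_insert _ (fun b hb => (h b hb).le) ha]
  rfl

lemma fL_lt {m : Ordinal} : ∀ l : List Ordinal, l.Pairwise (· > ·) → (∀ x ∈ l, x < m) →
    fL l < 2 ^ m
  | [], _, _ => by
      have : (0:Ordinal) < 2 ^ m := opow_pos m (by norm_num)
      simpa [fL] using this
  | a :: l, hs, hm => by
      rcases List.pairwise_cons.mp hs with ⟨hal, hl⟩
      have h1 : fL l < 2 ^ a := fL_lt l hl hal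
      have h2 : fL (a :: l) = 2 ^ a + fL l := rfl
      rw [h2]
      calc 2 ^ a + fL l < 2 ^ a + 2 ^ a := add_lt_add_right h1 _
        _ = 2 ^ (a + 1) := by rw [Ordinal.add_one_eq_succ, opow_succ, ← one_add_one_eq_two, mul_add, mul_one]
        _ ≤ 2 ^ m := opow_le_opow_right (by norm_num)
            (by simpa using (Order.succ_le_iff.mpr (hm a List.mem_cons_self)))

lemma fS_lt {m : Ordinal} {u : Finset Ordinal} (h : ∀ x ∈ u, x < m) : fS u < 2 ^ m :=
  fL_lt _ (Finset.sortedGT_sort u).pairwise (by simpa using h)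

lemma le_fL {a : Ordinal} : ∀ l : List Ordinal, a ∈ l → 2 ^ a ≤ fL l
  | b :: l, h => by
      rcases List.mem_cons.mp h with rfl | h
      · exact le_self_add
      · exact (le_fL l h).trans le_add_self

lemma opow_le_fS {a : Ordinal} {u : Finset Ordinal} (h : a ∈ u) : 2 ^ a ≤ fS u :=
  le_fL _ (by simpa using h)

lemma fS_ltStar : ∀ n : ℕ, ∀ u v : Finset Ordinal, u.card ≤ n → ltStar u v → fS u < fS v := by
  intro n
  induction n with
  | zero =>
    rintro u v hc ⟨hne, m, hmax, hmv⟩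
    have hu : u = ∅ := Finset.card_eq_zero.mp (Nat.le_zero.mp hc)
    subst hu
    exact lt_of_lt_of_le (fS_lt (by simp)) (opow_le_fS hmv)
  | succ n IH =>
    rintro u v hc ⟨hne, m, hmax, hmv⟩
    have hmuv : m ∈ symmDiff u v := Finset.mem_of_max hmax
    have hmu : m ∉ u := by
      rcases Finset.mem_symmDiff.mp hmuv with ⟨_, h⟩ | ⟨_, h⟩ <;> tauto
    by_cases hA : ∀ x ∈ u, x < m
    · exact lt_of_lt_of_le (fS_lt hA) (opow_le_fS hmv)
    · push_neg at hA
      obtain ⟨x, hxu, hmx⟩ := hA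
      have hne' : (u ∪ v).Nonempty := ⟨x, Finset.mem_union_left _ hxu⟩
      set a := (u ∪ v).max' hne' with ha
      have hax : x ≤ a := Finset.le_max' _ _ (Finset.mem_union_left _ hxu)
      have hma : m < a := lt_of_le_of_ne (hmx.trans hax)
        (by rintro rfl; exact hmu (hax.antisymm hmx ▸ hxu))
      have hauv : a ∈ u ∪ v := (u ∪ v).max'_mem hne'
      have hadelta : a ∉ symmDiff u v := fun h =>
        absurd ((Finset.le_max h).trans (le_of_eq hmax)) (by exact_mod_cast hma.not_ge)
      have hau : a ∈ u := by
        rcases Finset.mem_union.mp hauv with h | h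
        · exact h
        · by_contra hau
          exact hadelta (Finset.mem_symmDiff.mpr (Or.inr ⟨h, hau⟩))
      have hav : a ∈ v := by
        by_contra hav
        exact hadelta (Finset.mem_symmDiff.mpr (Or.inl ⟨hau, hav⟩))
      have hu' : ∀ x ∈ u.erase a, x < a := fun x hx =>
        lt_of_le_of_ne (Finset.le_max' _ _ (Finset.mem_union_left _ (Finset.mem_of_mem_erase hx)))
          (Finset.ne_of_mem_erase hx)
      have hv' : ∀ x ∈ v.erase a, x < a := fun x hx =>
        lt_of_le_of_ne (Finset.le_max' _ _ (Finset.mem_union_right _ (Finset.mem_of_mem_erase hx)))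
          (Finset.ne_of_mem_erase hx)
      have hudecomp : u = insert a (u.erase a) := (Finset.insert_erase hau).symm
      have hvdecomp : v = insert a (v.erase a) := (Finset.insert_erase hav).symm
      have hsd : symmDiff (u.erase a) (v.erase a) = symmDiff u v := by
        ext x
        by_cases hxa : x = a
        · subst hxa
          simp only [Finset.mem_symmDiff, Finset.mem_erase, ne_eq, not_true_eq_false,
            false_and, or_self, false_iff]
          exact fun h => hadelta (Finset.mem_symmDiff.mpr h)
        · simp [Finset.mem_symmDiff, Finset.mem_erase, hxa]
      have hls' : ltStar (u.erase a) (v.erase a) := by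
        refine ⟨?_, m, by rw [hsd]; exact hmax, Finset.mem_erase.mpr ⟨hma.ne, hmv⟩⟩
        intro h
        have : m ∈ symmDiff (u.erase a) (v.erase a) := hsd.symm ▸ hmuv
        rw [h, symmDiff_self] at this
        simpa using this
      have hcard : (u.erase a).card ≤ n := by
        have h0 := Finset.card_erase_of_mem hau
        have h1 : 0 < u.card := Finset.card_pos.mpr ⟨a, hau⟩
        omega
      have hlt := IH (u.erase a) (v.erase a) hcard hls'
      have e1 : fS u = 2 ^ a + fS (u.erase a) := by
        nth_rewrite 1 [hudecomp]; exact fS_insert hu'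
      have e2 : fS v = 2 ^ a + fS (v.erase a) := by
        nth_rewrite 1 [hvdecomp]; exact fS_insert hv'
      rw [e1, e2]
      exact add_lt_add_right hlt _

lemma ltStar_total {u v : Finset Ordinal} (h : u ≠ v) : ltStar u v ∨ ltStar v u := by
  have hne : symmDiff u v ≠ ∅ := by
    intro he
    exact h (symmDiff_eq_bot.mp he)
  obtain ⟨m, hm⟩ := Finset.max_of_nonempty (Finset.nonempty_iff_ne_empty.mpr hne)
  have hmem := Finset.mem_of_max hm
  rcases Finset.mem_symmDiff.mp hmem with ⟨hmu, _⟩ | ⟨hmv, _⟩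
  · exact Or.inr ⟨h.symm, m, by rw [symmDiff_comm]; exact hm, hmu⟩
  · exact Or.inl ⟨h, m, hm, hmv⟩

lemma ltStar_iff {u v : Finset Ordinal} : ltStar u v ↔ fS u < fS v := by
  constructor
  · exact fun h => fS_ltStar u.card u v le_rfl h
  · intro h
    have hne : u ≠ v := fun he => absurd h (by rw [he]; exact lt_irrefl _)
    rcases ltStar_total hne with h' | h'
    · exact h'
    · exact absurd (fS_ltStar v.card v u le_rfl h') h.asymm

lemma fS_inj {u v : Finset Ordinal} (h : fS u = fS v) : u = v := by
  by_contra hne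
  rcases ltStar_total hne with h' | h'
  · exact absurd h (ltStar_iff.mp h').ne
  · exact absurd h.symm (ltStar_iff.mp h').ne

lemma fS_surj : ∀ o b : Ordinal, o < 2 ^ b →
    ∃ u : Finset Ordinal, (∀ x ∈ u, x < b) ∧ fS u = o := by
  intro o
  induction o using Ordinal.induction with
  | h o IH =>
    intro b hb
    rcases eq_or_ne o 0 with rfl | ho
    · exact ⟨∅, by simp, by simp [fS, fL]⟩
    · set a := Ordinal.log 2 o with ha
      have h2 : (1:Ordinal) < 2 := one_lt_two
      have hao : 2 ^ a ≤ o := opow_log_le_self 2 ho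
      have hsum : 2 ^ a + (o - 2 ^ a) = o := Ordinal.add_sub_cancel_of_le hao
      have hr : o - 2 ^ a < 2 ^ a := by
        have h1 : o < 2 ^ (a + 1) := by
          rw [Ordinal.add_one_eq_succ]; exact lt_opow_succ_log_self h2 o
        rw [Ordinal.add_one_eq_succ, opow_succ, ← one_add_one_eq_two, mul_add, mul_one,
          one_add_one_eq_two] at h1
        have := hsum.symm ▸ h1
        exact (add_lt_add_iff_left _).mp this
      have hro : o - 2 ^ a < o := lt_of_lt_of_le hr hao
      obtain ⟨u', hu', hfu'⟩ := IH _ hro a hr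
      have hab : a < b := (opow_lt_opow_iff_right h2).mp (lt_of_le_of_lt hao hb)
      refine ⟨insert a u', ?_, ?_⟩
      · intro x hx
        rcases Finset.mem_insert.mp hx with rfl | hx
        · exact hab
        · exact (hu' x hx).trans hab
      · rw [fS_insert hu', hfu', hsum]

/-- If `ω ^ α = α`, then `<*` well-orders the finite subsets of `α`
in order type exactly `α`. -/
theorem ltStar_type_eq_of_omega_opow_eq
    (α : Ordinal) (hα : Ordinal.omega0 ^ α = α) :
    ∃ hwo : IsWellOrder {u : Finset Ordinal // ∀ x ∈ u, x < α}
        (fun u v => ltStar u.1 v.1),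
      @Ordinal.type {u : Finset Ordinal // ∀ x ∈ u, x < α} (fun u v => ltStar u.1 v.1) hwo = Ordinal.lift.{1, 0} α := by
  have h2 : (2:Ordinal) ^ α = α := by
    apply le_antisymm
    · calc (2:Ordinal) ^ α ≤ omega0 ^ α :=
            opow_le_opow_left α (by exact_mod_cast (nat_lt_omega0 2).le)
        _ = α := hα
    · exact right_le_opow α one_lt_two
  have hlt : ∀ u : {u : Finset Ordinal // ∀ x ∈ u, x < α}, fS u.1 < α := fun u => by
    have := fS_lt u.2
    rwa [h2] at this
  set F : {u : Finset Ordinal // ∀ x ∈ u, x < α} → α.ToType :=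
    fun u => Ordinal.ToType.mk (o := α) ⟨fS u.1, hlt u⟩ with hF
  have hbij : Function.Bijective F := by
    constructor
    · intro u v h
      have h1 : (⟨fS u.1, hlt u⟩ : Iio α) = ⟨fS v.1, hlt v⟩ := (Ordinal.ToType.mk (o := α)).injective h
      exact Subtype.ext (fS_inj (congrArg Subtype.val h1))
    · intro y
      set z : Iio α := (Ordinal.ToType.mk (o := α)).symm y with hz
      have hzα : (z : Ordinal) < 2 ^ α := by rw [h2]; exact z.2
      obtain ⟨u, hu, hfu⟩ := fS_surj z.1 α hzα
      refine ⟨⟨u, hu⟩, ?_⟩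
      show Ordinal.ToType.mk (o := α) ⟨fS u, _⟩ = y
      have : (⟨fS u, hlt ⟨u, hu⟩⟩ : Iio α) = z := Subtype.ext hfu
      rw [this, hz, OrderIso.apply_symm_apply]
  have iso : RelIso (fun u v : {u : Finset Ordinal // ∀ x ∈ u, x < α} => ltStar u.1 v.1)
      ((· < ·) : α.ToType → α.ToType → Prop) := by
    refine ⟨Equiv.ofBijective F hbij, ?_⟩
    intro u v
    show F u < F v ↔ ltStar u.1 v.1
    rw [hF]
    simp only [OrderIso.lt_iff_lt, Subtype.mk_lt_mk]
    exact ltStar_iff.symm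
  haveI hto : IsWellOrder α.ToType (· < ·) := isWellOrder_lt
  have hwo : IsWellOrder {u : Finset Ordinal // ∀ x ∈ u, x < α}
      (fun u v => ltStar u.1 v.1) :=
    @RelEmbedding.isWellOrder _ _ _ _ iso.toRelEmbedding hto
  refine ⟨hwo, ?_⟩
  have h3 := @RelIso.ordinal_lift_type_eq _ _ _ _ hwo hto iso
  rw [type_toType, Ordinal.lift_uzero] at h3
  exact h3
end

section
/- Let λ be an ordinal and let (f_m)_{m<ω} be a countable family of finitary functions f_m : λ^{r_m} → λ such that: (1) the family contains all coordinate projections and is closed under composition (hence the closure of any set Y ⊆ λ under the family equals {f_m(y⃗) : m < ω, y⃗ ∈ Y^{r_m}}); and (2) for every m and every l ≤ r_m there is m′ such that for all x⃗ ∈ λ^{r_m−l} and all ordinals κ, θ < λ, f_{m′}(x⃗, κ, θ) = sup{ f_m(ξ⃗, x⃗) : ξ⃗ ∈ κ^l and f_m(ξ⃗, x⃗) < θ } (taken as 0 if this set is empty). Let X₀ ⊆ λ be closed under all the f_m, let κ ∈ X₀ be an infinite cardinal, and let X be the closure of X₀ ∪ κ under all the f_m. Then for every regular cardinal θ ∈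 X₀ with κ < θ < λ, one has sup(X ∩ θ) = sup(X₀ ∩ θ). In other words, adjoining all ordinals below κ to the hull X₀ does not increase the supremum of the hull below any regular cardinal θ ∈ X₀ above κ. -/
open Ordinal Cardinal Set

/-- `Y` is closed under every function of the finitary family `f` (with arities `r`). -/
def ClosedUnder (r : ℕ → ℕ) (f : (m : ℕ) → (Fin (r m) → Ordinal) → Ordinal)
    (Y : Set Ordinal) : Prop :=
  ∀ m (x : Fin (r m) → Ordinal), (∀ i, x i ∈ Y) → f m x ∈ Y

/-- The closure of `B` under the finitary family `f`: the smallest superset of `B`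
closed under every function of the family. -/
def famClosure (r : ℕ → ℕ) (f : (m : ℕ) → (Fin (r m) → Ordinal) → Ordinal)
    (B : Set Ordinal) : Set Ordinal :=
  ⋂₀ {Y : Set Ordinal | B ⊆ Y ∧ ClosedUnder r f Y}

/-- Concatenation of two tuples of ordinals, recast to the appropriate arity. -/
def appendT {a b c : ℕ} (h : a + b = c) (x : Fin a → Ordinal) (y : Fin b → Ordinal) :
    Fin c → Ordinal :=
  fun i => Fin.append x y (Fin.cast h.symm i)

/-- A tuple followed by two extra ordinal arguments, recast to the appropriate arity. -/
def appendTwo {a c : ℕ} (h : a + 2 = c) (x : Fin a → Ordinal) (κ θ : Ordinal) :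
    Fin c → Ordinal :=
  fun i => Fin.append x ![κ, θ] (Fin.cast h.symm i)

lemma append_val_lt {a b : ℕ} (x : Fin a → Ordinal) (y : Fin b → Ordinal) (t : Fin (a+b))
    (h : t.val < a) : Fin.append x y t = x ⟨t.val, h⟩ := by
  have e : t = Fin.castAdd b ⟨t.val, h⟩ := Fin.ext rfl
  conv_lhs => rw [e]
  rw [Fin.append_left]

lemma append_val_ge {a b : ℕ} (x : Fin a → Ordinal) (y : Fin b → Ordinal) (t : Fin (a+b))
    (h : a ≤ t.val) : Fin.append x y t = y ⟨t.val - a, by omega⟩ := by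
  have e : t = Fin.natAdd a ⟨t.val - a, by omega⟩ := Fin.ext (by simp; omega)
  conv_lhs => rw [e]
  rw [Fin.append_right]

lemma famClosure_subset_W {r : ℕ → ℕ} {f : (m : ℕ) → (Fin (r m) → Ordinal) → Ordinal}
    (hproj : ∀ (k : ℕ) (i : Fin k), ∃ m, ∃ h : r m = k,
      ∀ x : Fin (r m) → Ordinal, f m x = x (Fin.cast h.symm i))
    (hcomp : ∀ (m k : ℕ) (g : Fin (r m) → ℕ) (hg : ∀ i, r (g i) = k),
      ∃ m', ∃ h : r m' = k, ∀ x : Fin k → Ordinal,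
        f m' (fun j => x (Fin.cast h j)) =
          f m (fun i => f (g i) (fun j => x (Fin.cast (hg i) j))))
    (B : Set Ordinal) :
    famClosure r f B ⊆
      {z | ∃ m, ∃ w : Fin (r m) → Ordinal, (∀ i, w i ∈ B) ∧ z = f m w} := by
  have hreindex : ∀ (m k : ℕ) (σ : Fin (r m) → Fin k), ∃ m', ∃ h : r m' = k,
      ∀ y : Fin k → Ordinal, f m' (fun j => y (Fin.cast h j)) = f m (fun i => y (σ i)) := by
    intro m k σ
    choose p hp hpe using hproj k
    obtain ⟨m', h, he⟩ := hcomp m k (fun i => p (σ i)) (fun i => hp (σ i))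
    refine ⟨m', h, fun y => ?_⟩
    rw [he y]
    congr 1
    funext i
    rw [hpe (σ i) (fun j => y (Fin.cast (hp (σ i)) j))]
    exact congrArg y (Fin.ext rfl)
  apply sInter_subset_of_mem
  constructor
  · intro y hy
    obtain ⟨m, h, he⟩ := hproj 1 ⟨0, one_pos⟩
    exact ⟨m, fun _ => y, fun _ => hy, (he (fun _ => y)).symm⟩
  · intro m x hx
    choose M w hw hxe using hx
    classical
    let S := (i : Fin (r m)) × Fin (r (M i))
    let k := Fintype.card S
    let e : S ≃ Fin k := Fintype.equivFin S
    let bigw : Fin k → Ordinal := fun j => w (e.symm j).1 (e.symm j).2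
    have key : ∀ i : Fin (r m), ∃ m'', ∃ h : r m'' = k,
        ∀ y : Fin k → Ordinal, f m'' (fun j => y (Fin.cast h j)) =
          f (M i) (fun t => y (e ⟨i, t⟩)) := fun i => hreindex (M i) k (fun t => e ⟨i, t⟩)
    choose m'' h'' he'' using key
    obtain ⟨ms, hs, hes⟩ := hcomp m k m'' h''
    refine ⟨ms, fun j => bigw (Fin.cast hs j), fun j => ?_, ?_⟩
    · exact hw _ _
    · rw [hes bigw]
      congr 1
      funext i
      rw [he'' i bigw, hxe i]
      congr 1
      funext t
      show w i t = w (e.symm (e ⟨i,t⟩)).1 (e.symm (e ⟨i,t⟩)).2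
      rw [Equiv.symm_apply_apply]

/-- Hull-enlargement: if the countable finitary family `f` on `λ` contains all
coordinate projections, is closed under composition, and contains the bounded-sup
functions (2), and `X₀ ⊆ λ` is closed under the family with `κ ∈ X₀` an infinite
cardinal, then the closure `X` of `X₀ ∪ κ` under the family satisfies
`sup (X ∩ θ) = sup (X₀ ∩ θ)` for every regular cardinal `θ ∈ X₀` with `κ < θ < λ`. -/
theorem hull_enlargement_sup_eq
    (lam : Ordinal) (r : ℕ → ℕ)
    (f : (m : ℕ) → (Fin (r m) → Ordinal) → Ordinal)
    (hf : ∀ m (x : Fin (r m) → Ordinal), (∀ i, x i < lam) → f m x < lam)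
    (hproj : ∀ (k : ℕ) (i : Fin k), ∃ m, ∃ h : r m = k,
      ∀ x : Fin (r m) → Ordinal, f m x = x (Fin.cast h.symm i))
    (hcomp : ∀ (m k : ℕ) (g : Fin (r m) → ℕ) (hg : ∀ i, r (g i) = k),
      ∃ m', ∃ h : r m' = k, ∀ x : Fin k → Ordinal,
        f m' (fun j => x (Fin.cast h j)) =
          f m (fun i => f (g i) (fun j => x (Fin.cast (hg i) j))))
    (hsup : ∀ (m l : ℕ) (hl : l ≤ r m), ∃ m', ∃ h : (r m - l) + 2 = r m',
      ∀ (x : Fin (r m - l) → Ordinal), (∀ i, x i < lam) →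
      ∀ (kap θ : Ordinal), kap < lam → θ < lam →
        f m' (appendTwo h x kap θ) =
          sSup {z : Ordinal | ∃ ξ : Fin l → Ordinal, (∀ i, ξ i < kap) ∧
            z = f m (appendT (Nat.add_sub_cancel' hl) ξ x) ∧ z < θ})
    (X₀ : Set Ordinal) (hX₀lam : X₀ ⊆ Set.Iio lam) (hX₀cl : ClosedUnder r f X₀)
    (kap : Ordinal) (hkapX : kap ∈ X₀) (hkapInf : Ordinal.omega0 ≤ kap)
    (hkapCard : kap.card.ord = kap) :
    ∀ θ ∈ X₀, kap < θ → θ < lam → θ.cof.ord = θ →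
      sSup (famClosure r f (X₀ ∪ Set.Iio kap) ∩ Set.Iio θ) =
        sSup (X₀ ∩ Set.Iio θ) := by
  intro θ hθX hκθ hθlam hθreg
  classical
  have hreindex : ∀ (m k : ℕ) (σ : Fin (r m) → Fin k), ∃ m', ∃ h : r m' = k,
      ∀ y : Fin k → Ordinal, f m' (fun j => y (Fin.cast h j)) = f m (fun i => y (σ i)) := by
    intro m k σ
    choose p hp hpe using hproj k
    obtain ⟨m', h, he⟩ := hcomp m k (fun i => p (σ i)) (fun i => hp (σ i))
    refine ⟨m', h, fun y => ?_⟩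
    rw [he y]
    congr 1
    funext i
    rw [hpe (σ i) (fun j => y (Fin.cast (hp (σ i)) j))]
    exact congrArg y (Fin.ext rfl)
  have hθ0 : (0 : Ordinal) < θ := lt_of_le_of_lt ((zero_le (a := kap))) hκθ
  -- cardinal facts
  have hκcard : ℵ₀ ≤ kap.card := by
    have := Ordinal.card_le_card hkapInf
    rwa [Ordinal.card_omega0] at this
  have hθcardord : θ.card.ord = θ := by
    apply le_antisymm (Cardinal.ord_card_le θ)
    conv_lhs => rw [← hθreg]
    exact Cardinal.ord_le_ord.2 (Ordinal.cof_le_card θ)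
  have hcofcard : θ.cof = θ.card := Cardinal.ord_injective (by rw [hθreg, hθcardord])
  have hκθcard : kap.card < θ.cof := by
    rw [hcofcard, ← Cardinal.ord_lt_ord, hkapCard, hθcardord]
    exact hκθ
  apply le_antisymm
  · -- hard direction
    apply csSup_le'
    rintro z ⟨hzX, hzθ⟩
    obtain ⟨m, w, hw, rfl⟩ := famClosure_subset_W hproj hcomp (X₀ ∪ Set.Iio kap) hzX
    -- split coordinates
    let Q : Fin (r m) → Prop := fun i => w i ∈ X₀
    let l := Fintype.card {i // ¬ Q i}
    let l' := Fintype.card {i // Q i}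
    have hll' : l + l' = r m := by
      have h0 := Fintype.card_congr ((Equiv.sumComm {i // ¬ Q i} {i // Q i}).trans
        (Equiv.sumCompl Q))
      rw [Fintype.card_sum, Fintype.card_fin] at h0
      exact h0
    let eA : {i // ¬ Q i} ≃ Fin l := Fintype.equivFin _
    let eB : {i // Q i} ≃ Fin l' := Fintype.equivFin _
    let σ : Fin (r m) → Fin (r m) := fun i =>
      if h : Q i then ⟨l + (eB ⟨i, h⟩).val, by have := (eB ⟨i, h⟩).2; omega⟩
      else ⟨(eA ⟨i, h⟩).val, by have := (eA ⟨i, h⟩).2; omega⟩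
    obtain ⟨m'', h'', he''⟩ := hreindex m (r m) σ
    have hl'' : l ≤ r m'' := by rw [h'']; omega
    have hlsub : r m'' - l = l' := by rw [h'']; omega
    let ξ : Fin l → Ordinal := fun a => w (eA.symm a).1
    have hξ : ∀ a, ξ a < kap := by
      intro a
      rcases hw (eA.symm a).1 with h | h
      · exact absurd h (eA.symm a).2
      · exact h
    let x : Fin (r m'' - l) → Ordinal := fun j => w (eB.symm ⟨j.val, hlsub ▸ j.isLt⟩).1
    have hx : ∀ j, x j ∈ X₀ := fun j => (eB.symm _).2
    have hxlam : ∀ j, x j < lam := fun j => hX₀lam (hx j)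
    have A : l + (r m'' - l) = r m'' := Nat.add_sub_cancel' hl''
    -- key equality
    have heq : f m'' (appendT A ξ x) = f m w := by
      have h1 := he'' (fun j : Fin (r m) => appendT A ξ x (Fin.cast h''.symm j))
      have l1 : (fun j => (fun j : Fin (r m) => appendT A ξ x (Fin.cast h''.symm j))
          (Fin.cast h'' j)) = appendT A ξ x := by
        funext j; exact congrArg (appendT A ξ x) (Fin.ext rfl)
      rw [l1] at h1
      rw [h1]
      congr 1
      funext i
      show appendT A ξ x (Fin.cast h''.symm (σ i)) = w i
      show Fin.append ξ x (Fin.cast A.symm (Fin.cast h''.symm (σ i))) = w i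
      by_cases h : Q i
      · have hval : (Fin.cast A.symm (Fin.cast h''.symm (σ i))).val = l + (eB ⟨i, h⟩).val := by
          show (σ i).val = _
          simp only [σ, dif_pos h]
        have ht : Fin.cast A.symm (Fin.cast h''.symm (σ i))
            = Fin.natAdd l ⟨(eB ⟨i, h⟩).val, by have := (eB ⟨i, h⟩).isLt; omega⟩ := by
          apply Fin.ext; exact hval
        rw [ht, Fin.append_right]
        show w (eB.symm (⟨(eB ⟨i, h⟩).val, (eB ⟨i, h⟩).isLt⟩ : Fin l')).1 = w i
        simp only [Fin.eta, Equiv.symm_apply_apply]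
      · have hval : (Fin.cast A.symm (Fin.cast h''.symm (σ i))).val = (eA ⟨i, h⟩).val := by
          show (σ i).val = _
          simp only [σ, dif_neg h]
        have ht : Fin.cast A.symm (Fin.cast h''.symm (σ i))
            = Fin.castAdd (r m'' - l) (eA ⟨i, h⟩) := by
          apply Fin.ext; exact hval
        rw [ht, Fin.append_left]
        show w (eA.symm (eA ⟨i, h⟩)).1 = w i
        rw [Equiv.symm_apply_apply]
    obtain ⟨m₃, h₃, hs3⟩ := hsup m'' l hl''
    have hmain := hs3 x hxlam kap θ (lt_trans hκθ hθlam) hθlam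
    set S := {z : Ordinal | ∃ ξ' : Fin l → Ordinal, (∀ i, ξ' i < kap) ∧
      z = f m'' (appendT (Nat.add_sub_cancel' hl'') ξ' x) ∧ z < θ} with hSdef
    have hzS : f m w ∈ S := ⟨ξ, hξ, heq.symm, hzθ⟩
    have hSsub : S ⊆ Set.Iio θ := by rintro z ⟨_, _, _, h4⟩; exact h4
    have hSbdd : BddAbove S := ⟨θ, fun z hz => (hSsub hz).le⟩
    have hzle : f m w ≤ sSup S := le_csSup hSbdd hzS
    have hSX : sSup S ∈ X₀ := by
      rw [← hmain]
      apply hX₀cl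
      intro i
      show Fin.append x ![kap, θ] (Fin.cast h₃.symm i) ∈ X₀
      have hpair : ∀ j : Fin 2, (![kap, θ] : Fin 2 → Ordinal) j ∈ X₀ := by
        intro j
        fin_cases j
        · exact hkapX
        · exact hθX
      by_cases h : (Fin.cast h₃.symm i).val < r m'' - l
      · rw [append_val_lt _ _ _ h]; exact hx _
      · rw [append_val_ge _ _ _ (le_of_not_gt h)]; exact hpair _
    have hSθ : sSup S < θ := by
      let e := (Ordinal.ToType.mk (o := kap))
      let g : (Fin l → kap.ToType) → Ordinal := fun v =>
        f m'' (appendT (Nat.add_sub_cancel' hl'') (fun i => (e.symm (v i)).1) x)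
      let F : (Fin l → kap.ToType) → Ordinal := fun v => if g v < θ then g v else 0
      have hFθ : ∀ v, F v < θ := by
        intro v
        show (if g v < θ then g v else 0) < θ
        split
        · assumption
        · exact hθ0
      have hrange : S ⊆ Set.range F := by
        rintro z ⟨ξ', hξ', rfl, hzθ'⟩
        refine ⟨fun i => e ⟨ξ' i, hξ' i⟩, ?_⟩
        have hcoord : (fun i => ((e.symm (e ⟨ξ' i, hξ' i⟩) : Set.Iio kap) : Ordinal)) = ξ' := by
          funext i
          rw [OrderIso.symm_apply_apply]
        have hg : g (fun i => e ⟨ξ' i, hξ' i⟩) =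
            f m'' (appendT (Nat.add_sub_cancel' hl'') ξ' x) := by
          show f m'' (appendT (Nat.add_sub_cancel' hl'')
            (fun i => ((e.symm (e ⟨ξ' i, hξ' i⟩) : Set.Iio kap) : Ordinal)) x) = _
          rw [hcoord]
        show (if g _ < θ then g _ else 0) = _
        rw [hg, if_pos hzθ']
      have hcard : #(Fin l → kap.ToType) < θ.cof := by
        have h1 : #(Fin l → kap.ToType) = kap.card ^ (l : ℕ) := by
          simp [Cardinal.mk_arrow, Cardinal.mk_toType, Cardinal.power_natCast]
        rw [h1]
        exact lt_of_le_of_lt (Cardinal.power_nat_le hκcard) hκθcard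
      have hFbdd : BddAbove (Set.range F) :=
        ⟨θ, by rintro z ⟨v, rfl⟩; exact (hFθ v).le⟩
      exact lt_of_le_of_lt (csSup_le_csSup' hFbdd hrange) (Ordinal.iSup_lt_ord hcard hFθ)
    exact le_trans hzle (le_csSup ⟨θ, fun a ha => le_of_lt ha.2⟩ ⟨hSX, hSθ⟩)
  · -- easy direction
    apply csSup_le_csSup' ⟨θ, fun a ha => le_of_lt ha.2⟩
    apply inter_subset_inter_left
    intro y hy
    intro Y hY
    exact hY.1 (Or.inl hy)
end

section
/- Let β̄ be an ordinal and let π : β̄ → Ord be a strictly increasing function which is continuous at points of countable cofinality, i.e., for every limit ordinal δ < β̄ with cf(δ) = ω one has π(δ) = sup{π(ξ) : ξ < δ}. Let D ⊆ β̄ be a set of ordinals that is closed in sup(D) and has order type exactly ω₁. Then the image π''D = {π(δ) : δ ∈ D} is closed in sup(π''D) and has order type exactly ω₁. -/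
open Ordinal Cardinal Set

/-- If `π : β̄ → Ord` is strictly increasing and continuous at points of
countable cofinality, and `D ⊆ β̄` is closed in `sup D` of order type exactly
`ω₁`, then `π '' D` is closed in `sup (π '' D)` and has order type exactly `ω₁`. -/
theorem image_closed_orderType_omega1
    (bb : Ordinal) (π : Ordinal → Ordinal)
    (hmono : ∀ x y : Ordinal, x < y → y < bb → π x < π y)
    (hcont : ∀ δ < bb, Order.IsSuccLimit δ → δ.cof = Cardinal.aleph0 →
      π δ = sSup (π '' Set.Iio δ))
    (D : Set Ordinal) (hD : D ⊆ Set.Iio bb)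
    (hclosed : ClosedIn D (sSup D))
    (hot : otype D = (Cardinal.aleph 1).ord) :
    ClosedIn (π '' D) (sSup (π '' D)) ∧
      otype (π '' D) = (Cardinal.aleph 1).ord := by
  classical
  have hDsmall : Small.{0} D := small_subset hD
  have hkey : ∀ x ∈ D, ∀ y ∈ D, x < y → π x < π y := fun x _ y hy hxy =>
    hmono x y hxy (hD hy)
  have hinj : ∀ x ∈ D, ∀ y ∈ D, π x = π y → x = y := by
    intro x hx y hy h
    rcases lt_trichotomy x y with h' | h' | h'
    · exact absurd h (ne_of_lt (hkey x hx y hy h'))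
    · exact h'
    · exact absurd h.symm (ne_of_lt (hkey y hy x hx h'))
  -- the order isomorphism between `D` and `π '' D`
  have hiso : Nonempty ((@Subrel Ordinal.{0} (· < ·) (· ∈ D)) ≃r
      (@Subrel Ordinal.{0} (· < ·) (· ∈ π '' D))) := by
    refine ⟨RelIso.mk (Equiv.ofBijective
      (fun a : D => (⟨π a.1, Set.mem_image_of_mem π a.2⟩ : π '' D)) ⟨?_, ?_⟩) ?_⟩
    · rintro a b hab
      exact Subtype.ext (hinj _ a.2 _ b.2 (congrArg Subtype.val hab))
    · rintro ⟨x, δ, hδ, rfl⟩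
      exact ⟨⟨δ, hδ⟩, rfl⟩
    · rintro ⟨a, ha⟩ ⟨b, hb⟩
      show π a < π b ↔ a < b
      constructor
      · intro h
        rcases lt_trichotomy a b with h' | h' | h'
        · exact h'
        · subst h'; exact absurd h (lt_irrefl _)
        · exact absurd (hkey b hb a ha h') (asymm h)
      · exact hkey a ha b hb
  have hteq : Ordinal.type (@Subrel Ordinal.{0} (· < ·) (· ∈ D))
      = Ordinal.type (@Subrel Ordinal.{0} (· < ·) (· ∈ π '' D)) :=
    Ordinal.type_eq.mpr hiso
  have hot2 : otype (π '' D) = (Cardinal.aleph 1).ord := by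
    rw [← hot]; unfold otype; rw [hteq]
  -- the order type of `D`, as a genuine type equality
  have hSne : Set.Nonempty {o : Ordinal.{0} |
      Ordinal.lift.{1, 0} o = Ordinal.type (@Subrel Ordinal.{0} (· < ·) (· ∈ D))} := by
    by_contra h
    rw [Set.not_nonempty_iff_eq_empty] at h
    have h0 : otype D = 0 := by unfold otype; rw [h, Ordinal.sInf_empty]
    rw [hot] at h0
    exact absurd (Cardinal.ord_eq_zero.mp h0) (Cardinal.aleph_pos 1).ne'
  have hmemS : Ordinal.lift.{1, 0} ((Cardinal.aleph 1).ord)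
      = Ordinal.type (@Subrel Ordinal.{0} (· < ·) (· ∈ D)) := by
    have h := csInf_mem hSne
    have h' : otype D ∈ {o : Ordinal.{0} |
        Ordinal.lift.{1, 0} o = Ordinal.type (@Subrel Ordinal.{0} (· < ·) (· ∈ D))} := h
    rwa [hot] at h'
  -- proper initial segments of `D` are countable
  have hseg : ∀ δ₀ ∈ D, ({δ | δ ∈ D ∧ δ < δ₀} : Set Ordinal).Countable := by
    intro δ₀ h0
    rw [Cardinal.countable_iff_lt_aleph_one]
    have h1 : Ordinal.typein (@Subrel Ordinal.{0} (· < ·) (· ∈ D)) ⟨δ₀, h0⟩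
        < Ordinal.type (@Subrel Ordinal.{0} (· < ·) (· ∈ D)) := Ordinal.typein_lt_type _ _
    rw [← hmemS, Cardinal.lift_ord] at h1
    have h2 := Cardinal.lt_ord.mp h1
    rw [Ordinal.card_typein] at h2
    have e2 : {y : D // @Subrel Ordinal.{0} (· < ·) (· ∈ D) y ⟨δ₀, h0⟩}
        ≃ ({δ | δ ∈ D ∧ δ < δ₀} : Set Ordinal) :=
      ⟨fun y => ⟨y.1.1, y.1.2, y.2⟩, fun z => ⟨⟨z.1, z.2.1⟩, z.2.2⟩,
        fun _ => rfl, fun _ => rfl⟩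
    calc #({δ | δ ∈ D ∧ δ < δ₀} : Set Ordinal) = _ := (Cardinal.mk_congr e2).symm
      _ < Cardinal.lift.{1, 0} (Cardinal.aleph 1) := h2
      _ = Cardinal.aleph 1 := by simp
  refine ⟨?_, hot2⟩
  -- closedness
  intro β hβsup hβpt
  obtain ⟨hβpos, hβeq⟩ := hβpt
  set A : Set Ordinal := {δ | δ ∈ D ∧ π δ < β} with hA
  have hEA : π '' D ∩ Set.Iio β = π '' A := by
    ext x
    constructor
    · rintro ⟨⟨δ, hδ, rfl⟩, hx⟩; exact ⟨δ, ⟨hδ, hx⟩, rfl⟩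
    · rintro ⟨δ, ⟨hδ, hx⟩, rfl⟩; exact ⟨⟨δ, hδ, rfl⟩, hx⟩
  rw [hEA] at hβeq
  have hAsub : A ⊆ D := fun δ h => h.1
  have hAsmall : Small.{0} A := small_subset hAsub
  have hAbdd : BddAbove A := Ordinal.bddAbove_of_small (s := A)
  have hAne : A.Nonempty := by
    by_contra h
    rw [Set.not_nonempty_iff_eq_empty] at h
    rw [h, Set.image_empty, csSup_empty, Ordinal.bot_eq_zero] at hβeq
    exact absurd hβeq hβpos.ne'
  have hnomax : ∀ δ ∈ A, ∃ δ' ∈ A, δ < δ' := by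
    intro δ hδ
    by_contra h
    push_neg at h
    have hub : β ≤ π δ := by
      rw [hβeq]
      apply csSup_le ⟨π δ, Set.mem_image_of_mem _ hδ⟩
      rintro x ⟨δ', hδ', rfl⟩
      rcases (h δ' hδ').lt_or_eq with h' | h'
      · exact (hkey δ' hδ'.1 δ hδ.1 h').le
      · rw [h']
    exact absurd hδ.2 (not_lt.2 hub)
  set δb := sSup A with hδb
  have hltδb : ∀ δ ∈ A, δ < δb := fun δ h =>
    let ⟨δ', h', hlt⟩ := hnomax δ h
    lt_of_lt_of_le hlt (le_csSup hAbdd h')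
  have hπDne : (π '' D).Nonempty := by
    by_contra h
    rw [Set.not_nonempty_iff_eq_empty] at h
    rw [h, csSup_empty] at hβsup
    exact absurd hβsup (zero_le (a := β)).not_gt
  obtain ⟨x, hx, hβx⟩ := exists_lt_of_lt_csSup hπDne hβsup
  obtain ⟨δ0, hδ0, rfl⟩ := hx
  have hAδ0 : ∀ δ ∈ A, δ < δ0 := by
    intro δ h
    rcases lt_trichotomy δ δ0 with h' | h' | h'
    · exact h'
    · exact absurd (h' ▸ h.2) (not_lt.2 hβx.le)
    · exact absurd (hkey δ0 hδ0 δ h.1 h') (not_lt.2 (h.2.trans hβx).le)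
  have hδbD : δb ∈ D := by
    have hδble : δb ≤ δ0 := csSup_le hAne fun δ h => (hAδ0 δ h).le
    rcases hδble.lt_or_eq with h | h
    · apply hclosed δb (lt_of_lt_of_le h (le_csSup (Ordinal.bddAbove_of_small (s := D)) hδ0))
      refine ⟨?_, ?_⟩
      · obtain ⟨δ, hδ⟩ := hAne
        exact lt_of_le_of_lt (zero_le (a := δ)) (hltδb δ hδ)
      · apply le_antisymm
        · exact csSup_le_csSup Ordinal.bddAbove_of_small hAne
            (fun δ h' => ⟨h'.1, hltδb δ h'⟩)
        · obtain ⟨δ, hδ⟩ := hAne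
          exact csSup_le ⟨δ, hδ.1, hltδb δ hδ⟩ fun x hx => hx.2.le
    · rwa [h]
  have hlim : Order.IsSuccLimit δb := by
    rw [Ordinal.isSuccLimit_iff]
    refine ⟨?_, ?_⟩
    · obtain ⟨δ, hδ⟩ := hAne
      exact (lt_of_le_of_lt (zero_le (a := δ)) (hltδb δ hδ)).ne'
    · refine Order.isSuccPrelimit_of_succ_lt ?_; intro a ha
      obtain ⟨δ, hδ, haδ⟩ := exists_lt_of_lt_csSup hAne ha
      exact lt_of_le_of_lt (Order.succ_le_of_lt haδ) (hltδb δ hδ)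
  have hAss : A ⊆ {δ | δ ∈ D ∧ δ < δ0} := fun δ h => ⟨h.1, hAδ0 δ h⟩
  have hAcnt : A.Countable := Set.Countable.mono hAss (hseg δ0 hδ0)
  obtain ⟨g, hg⟩ := hAcnt.exists_eq_range hAne
  have hsup : δb = iSup g := by rw [hδb, hg]; rfl
  have hcof : δb.cof = Cardinal.aleph0 := by
    apply le_antisymm
    · have H : ∀ n, g n < iSup g := by
        intro n
        have hmem : g n ∈ A := by rw [hg]; exact Set.mem_range_self n
        calc g n < δb := hltδb _ hmem
          _ = iSup g := hsup
      have h := Ordinal.cof_iSup_le H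
      rw [← hsup] at h
      simpa using h
    · exact Ordinal.aleph0_le_cof.mpr hlim
  have hδbb : δb < bb := hD hδbD
  have hc := hcont δb hδbb hlim hcof
  have hπδb : π δb = β := by
    apply le_antisymm
    · rw [hc]
      have h0mem : (0 : Ordinal) ∈ Set.Iio δb := hlim.pos
      have hne' : (π '' Set.Iio δb).Nonempty := ⟨π 0, Set.mem_image_of_mem π h0mem⟩
      apply csSup_le hne'
      rintro x ⟨ξ, hξ, rfl⟩
      obtain ⟨δ, hδ, hξδ⟩ := exists_lt_of_lt_csSup hAne hξ
      exact (lt_trans (hmono ξ δ hξδ (hD hδ.1)) hδ.2).le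
    · rw [hβeq, hc]
      exact csSup_le_csSup Ordinal.bddAbove_of_small (hAne.image π)
        (Set.image_mono fun δ h => hltδb δ h)
  exact ⟨δb, hδbD, hπδb⟩
end
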